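/- Let n ≥ 1 and let f : E → ℝ be a nonnegative, measurable, integrable function with unimodal radial power density: there exists p* > 0 such that for every unit vector u ∈ E the function p ↦ p^{(n−2)/2} · f(√p • u) is monotone non-decreasing on (0, p*] and non-increasing on [p*, ∞). Suppose Metric.closedBall 0 d_min ⊆ Ω_i ⊆ Metric.closedBall 0 d_max for every i, with 0 < d_min ≤ d_max. Then the symbol error rate P_e(γ) = 1 − Σ_{i=1}^{M} q_i ∫_{√γ • Ω_i} f(x) dx is convex on {γ : γ > 0 and γ ≥ p*/d_min²} and concave on (0, p*/d_max²]. -/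

import Mathlib

set_option linter.unusedSectionVars false
set_option maxHeartbeats 1000000
open MeasureTheory Real Set Pointwise ENNReal Metric


lemma aux_lin (x y G : ℝ) (hx : 0 ≤ x) (hxy : x ≤ y) (hG : 0 ≤ G) :
    ∫⁻ r in Ioo x y, ENNReal.ofReal (r * G) = ENNReal.ofReal ((y^2 - x^2)/2 * G) := by
  have hint : IntegrableOn (fun r : ℝ => r * G) (Ioo x y) := by
    apply (intervalIntegrable_iff_integrableOn_Ioo_of_le hxy).mp
    exact (intervalIntegral.intervalIntegrable_id.mul_const G)
  rw [← ofReal_integral_eq_lintegral_ofReal hint]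
  · congr 1
    rw [← integral_Ioc_eq_integral_Ioo, ← intervalIntegral.integral_of_le hxy,
      intervalIntegral.integral_mul_const, integral_id]

  · filter_upwards [ae_restrict_mem measurableSet_Ioo] with r hr
    exact mul_nonneg (hx.trans hr.1.le) hG

lemma aux_pow (n : ℕ) (hn : 1 ≤ n) (r : ℝ) (hr : 0 < r) :
    (r : ℝ) ^ (n - 1) = r * (r ^ 2) ^ (((n : ℝ) - 2) / 2) := by
  have h2 : (r ^ 2 : ℝ) ^ (((n : ℝ) - 2) / 2) = r ^ ((n : ℝ) - 2) := by
    rw [← Real.rpow_natCast r 2, ← Real.rpow_mul hr.le]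
    ring_nf
  have h3 : ((n : ℝ) - 1) = ((n - 1 : ℕ) : ℝ) := by
    push_cast [Nat.cast_sub hn]; ring
  rw [h2, ← Real.rpow_natCast r (n-1), ← h3]
  rw [show r * r ^ ((n:ℝ) - 2) = r ^ (1:ℝ) * r ^ ((n:ℝ)-2) by rw [Real.rpow_one],
    ← Real.rpow_add hr]
  ring_nf


lemma aux_polar (n : ℕ) (hn : 1 ≤ n) (F : EuclideanSpace ℝ (Fin n) → ℝ≥0∞)
    (hF : Measurable F) (S : Set (EuclideanSpace ℝ (Fin n))) (hS : MeasurableSet S) :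
    ∫⁻ x in S, F x =
      ∫⁻ u : sphere (0 : EuclideanSpace ℝ (Fin n)) 1,
        (∫⁻ r in Ioi (0:ℝ), ENNReal.ofReal (r ^ (n-1)) * S.indicator F (r • (u:EuclideanSpace ℝ (Fin n))))
        ∂((volume : Measure (EuclideanSpace ℝ (Fin n))).toSphere) := by
  haveI : Nonempty (Fin n) := ⟨⟨0, hn⟩⟩
  haveI : Nontrivial (EuclideanSpace ℝ (Fin n)) := inferInstance
  have hdim : Module.finrank ℝ (EuclideanSpace ℝ (Fin n)) = n := finrank_euclideanSpace_fin
  have hind : Measurable (S.indicator F) := hF.indicator hS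
  have hmeas2 : Measurable (fun p : sphere (0:EuclideanSpace ℝ (Fin n)) 1 × Ioi (0:ℝ) =>
      S.indicator F (p.2.1 • p.1.1)) := by
    apply hind.comp
    exact (measurable_subtype_coe.comp measurable_snd).smul
      (measurable_subtype_coe.comp measurable_fst)
  have h1 : ∫⁻ x in S, F x = ∫⁻ x : ({0}ᶜ : Set (EuclideanSpace ℝ (Fin n))), S.indicator F ↑x
      ∂((volume : Measure (EuclideanSpace ℝ (Fin n))).comap (↑)) := by
    rw [lintegral_subtype_comap (measurableSet_singleton (0:EuclideanSpace ℝ (Fin n))).compl,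
      restrict_compl_singleton, ← lintegral_indicator hS]
  have h2 := (Measure.measurePreserving_homeomorphUnitSphereProd
      (volume : Measure (EuclideanSpace ℝ (Fin n)))).lintegral_comp hmeas2
  have h3 : ∀ x : ({0}ᶜ : Set (EuclideanSpace ℝ (Fin n))),
      S.indicator F ((homeomorphUnitSphereProd (EuclideanSpace ℝ (Fin n)) x).2.1 •
        ((homeomorphUnitSphereProd (EuclideanSpace ℝ (Fin n)) x).1.1)) = S.indicator F ↑x := by
    intro x
    congr 1
    calc (homeomorphUnitSphereProd (EuclideanSpace ℝ (Fin n)) x).2.1 •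
          ((homeomorphUnitSphereProd (EuclideanSpace ℝ (Fin n)) x).1.1)
        = ((homeomorphUnitSphereProd (EuclideanSpace ℝ (Fin n))).symm
            (homeomorphUnitSphereProd (EuclideanSpace ℝ (Fin n)) x) : EuclideanSpace ℝ (Fin n)) := by
          rw [homeomorphUnitSphereProd_symm_apply_coe]
      _ = ↑x := by rw [(homeomorphUnitSphereProd (EuclideanSpace ℝ (Fin n))).symm_apply_apply x]
  rw [h1, ← lintegral_congr h3, h2, lintegral_prod _ hmeas2.aemeasurable]
  refine lintegral_congr fun u => ?_
  rw [hdim, Measure.volumeIoiPow]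
  rw [lintegral_withDensity_eq_lintegral_mul_non_measurable]
  · simp only [Pi.mul_apply]
    exact lintegral_subtype_comap measurableSet_Ioi
      (fun r : ℝ => ENNReal.ofReal (r ^ (n-1)) * S.indicator F (r • (u:EuclideanSpace ℝ (Fin n))))
  · exact (measurable_subtype_coe.pow_const _).ennreal_ofReal
  · exact ae_of_all _ fun r => ENNReal.ofReal_lt_top


variable {n : ℕ}

noncomputable def rad (W : Set (EuclideanSpace ℝ (Fin n)))
    (u : EuclideanSpace ℝ (Fin n)) : ℝ :=
  sSup {r : ℝ | 0 < r ∧ r • u ∈ W}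

section
variable {W : Set (EuclideanSpace ℝ (Fin n))} {dmin dmax : ℝ}
  {u : EuclideanSpace ℝ (Fin n)}
  (hstar : StarConvex ℝ 0 W)
  (hsub1 : Metric.closedBall 0 dmin ⊆ W) (hsub2 : W ⊆ Metric.closedBall 0 dmax)
  (hdmin : 0 < dmin) (hu : ‖u‖ = 1)

include hsub1 hdmin hu in
lemma rad_mem_ne : dmin ∈ {r : ℝ | 0 < r ∧ r • u ∈ W} := by
  refine ⟨hdmin, hsub1 ?_⟩
  simp [mem_closedBall_zero_iff, norm_smul, hu, abs_of_pos hdmin]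

include hsub2 hu in
lemma rad_bdd : BddAbove {r : ℝ | 0 < r ∧ r • u ∈ W} := by
  refine ⟨dmax, fun r hr => ?_⟩
  have := hsub2 hr.2
  rw [mem_closedBall_zero_iff, norm_smul, hu, mul_one, Real.norm_eq_abs, abs_of_pos hr.1] at this
  exact this

include hsub1 hsub2 hdmin hu in
lemma rad_ge : dmin ≤ rad W u :=
  le_csSup (rad_bdd hsub2 hu) (rad_mem_ne hsub1 hdmin hu)

include hsub1 hsub2 hdmin hu in
lemma rad_le : rad W u ≤ dmax :=
  csSup_le ⟨dmin, rad_mem_ne hsub1 hdmin hu⟩ fun r hr => by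
    have := hsub2 hr.2
    rwa [mem_closedBall_zero_iff, norm_smul, hu, mul_one, Real.norm_eq_abs, abs_of_pos hr.1] at this

include hstar hsub1 hsub2 hdmin hu in
lemma rad_mem_of_lt {r : ℝ} (hr : 0 < r) (hlt : r < rad W u) : r • u ∈ W := by
  obtain ⟨s, hs, hrs⟩ := exists_lt_of_lt_csSup ⟨dmin, rad_mem_ne hsub1 hdmin hu⟩ hlt
  have hs0 : (0:ℝ) < s := hs.1
  have : (r / s) • (s • u) = r • u := by
    rw [smul_smul, div_mul_cancel₀ _ hs0.ne']
  rw [← this]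
  exact hstar.smul_mem hs.2 (by positivity) ((div_le_one hs0).2 hrs.le)

include hsub2 hu in
lemma rad_le_of_mem {r : ℝ} (hr : 0 < r) (hmem : r • u ∈ W) : r ≤ rad W u :=
  le_csSup (rad_bdd hsub2 hu) ⟨hr, hmem⟩

-- slice characterization for scaled sets
include hstar hsub1 hsub2 hdmin hu in
lemma slice_mem {γ r : ℝ} (hγ : 0 < γ) (hr : 0 < r) (hlt : r < Real.sqrt γ * rad W u) :
    r • u ∈ Real.sqrt γ • W := by
  have hsγ : (0:ℝ) < Real.sqrt γ := Real.sqrt_pos.2 hγ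
  rw [Set.mem_smul_set_iff_inv_smul_mem₀ hsγ.ne', smul_smul]
  have h1 : (Real.sqrt γ)⁻¹ * r < rad W u := by
    rw [inv_mul_lt_iff₀ hsγ]; linarith [hlt]
  exact rad_mem_of_lt hstar hsub1 hsub2 hdmin hu (by positivity) h1

include hsub2 hu in
lemma slice_le {γ r : ℝ} (hγ : 0 < γ) (hr : 0 < r) (hmem : r • u ∈ Real.sqrt γ • W) :
    r ≤ Real.sqrt γ * rad W u := by
  have hsγ : (0:ℝ) < Real.sqrt γ := Real.sqrt_pos.2 hγ
  rw [Set.mem_smul_set_iff_inv_smul_mem₀ hsγ.ne', smul_smul] at hmem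
  have := rad_le_of_mem hsub2 hu (r := (Real.sqrt γ)⁻¹ * r) (by positivity) hmem
  calc r = Real.sqrt γ * ((Real.sqrt γ)⁻¹ * r) := by field_simp
    _ ≤ Real.sqrt γ * rad W u := by
        exact mul_le_mul_of_nonneg_left this hsγ.le

section
variable (f : EuclideanSpace ℝ (Fin n) → ℝ)
include hstar hsub1 hsub2 hdmin hu in
lemma annulus_eq {a c : ℝ} (ha : 0 < a) (hac : a ≤ c) :
    (∫⁻ r in Ioi (0:ℝ), ENNReal.ofReal (r ^ (n-1)) *
      ((Real.sqrt c • W \ Real.sqrt a • W).indicator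
        (fun x => ENNReal.ofReal (f x))) (r • u)) =
    ∫⁻ r in Ioo (Real.sqrt a * rad W u) (Real.sqrt c * rad W u),
      ENNReal.ofReal (r ^ (n-1) * f (r • u)) := by
  have hc : 0 < c := lt_of_lt_of_le ha hac
  have hR : 0 < rad W u := lt_of_lt_of_le hdmin (rad_ge hsub1 hsub2 hdmin hu)
  set x := Real.sqrt a * rad W u with hxdef
  set y := Real.sqrt c * rad W u with hydef
  have hx : 0 < x := by positivity
  have hxy : x ≤ y := by
    apply mul_le_mul_of_nonneg_right (Real.sqrt_le_sqrt hac) hR.le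
  have h2 : ∀ᵐ (r : ℝ) ∂volume, r ∉ ({x, y} : Set ℝ) :=
    (Set.Countable.insert x (Set.countable_singleton y)).ae_notMem volume
  have key : ∀ᵐ r ∂(volume.restrict (Ioi (0:ℝ))),
      ENNReal.ofReal (r ^ (n-1)) *
        ((Real.sqrt c • W \ Real.sqrt a • W).indicator
          (fun z => ENNReal.ofReal (f z))) (r • u)
      = (Ioo x y).indicator (fun r => ENNReal.ofReal (r ^ (n-1) * f (r • u))) r := by
    filter_upwards [ae_restrict_mem measurableSet_Ioi, ae_restrict_of_ae h2] with r hr hne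
    have hr0 : (0:ℝ) < r := hr
    by_cases hmem : r ∈ Ioo x y
    · rw [Set.indicator_of_mem hmem]
      have m1 : r • u ∈ Real.sqrt c • W :=
        slice_mem hstar hsub1 hsub2 hdmin hu hc hr0 hmem.2
      have m2 : r • u ∉ Real.sqrt a • W := fun hm =>
        absurd (slice_le hsub2 hu ha hr0 hm) (not_le.2 hmem.1)
      rw [Set.indicator_of_mem (Set.mem_diff _ |>.2 ⟨m1, m2⟩),
        ENNReal.ofReal_mul (pow_nonneg hr0.le _)]
    · rw [Set.indicator_of_notMem hmem]
      have hnx : r ≠ x := fun h => hne (by simp [h])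
      have hny : r ≠ y := fun h => hne (by simp [h])
      have : r • u ∉ (Real.sqrt c • W \ Real.sqrt a • W) := by
        rcases lt_trichotomy r x with h|h|h
        · exact fun hd => hd.2 (slice_mem hstar hsub1 hsub2 hdmin hu ha hr0 h)
        · exact absurd h hnx
        · intro hd
          have h1 : r ≤ y := slice_le hsub2 hu hc hr0 hd.1
          have h2 : r < y := lt_of_le_of_ne h1 hny
          exact hmem ⟨h, h2⟩
      rw [Set.indicator_of_notMem this, mul_zero]
  rw [lintegral_congr_ae key, lintegral_indicator measurableSet_Ioo,
    Measure.restrict_restrict measurableSet_Ioo,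
    show Ioo x y ∩ Ioi 0 = Ioo x y from
      Set.inter_eq_left.2 (fun r (hr : r ∈ Ioo x y) => lt_trans hx hr.1)]
end
end

section Bounds
variable {n : ℕ} (hn : 1 ≤ n) (f : EuclideanSpace ℝ (Fin n) → ℝ)
  (hf0 : ∀ z, 0 ≤ f z) (u : EuclideanSpace ℝ (Fin n))

include hn hf0 in
lemma bound_upper {x y G : ℝ} (hx : 0 < x) (hxy : x ≤ y) (hG : 0 ≤ G)
    (hb : ∀ r, x < r → r < y → (r^2) ^ (((n:ℝ)-2)/2) * f (r • u) ≤ G) :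
    ∫⁻ r in Ioo x y, ENNReal.ofReal (r^(n-1) * f (r • u)) ≤
      ENNReal.ofReal ((y^2-x^2)/2 * G) := by
  rw [← aux_lin x y G hx.le hxy hG]
  refine lintegral_mono_ae ?_
  filter_upwards [ae_restrict_mem measurableSet_Ioo] with r hr
  have hr0 : 0 < r := lt_trans hx hr.1
  rw [aux_pow n hn r hr0, mul_assoc]
  exact ENNReal.ofReal_le_ofReal
    (mul_le_mul_of_nonneg_left (hb r hr.1 hr.2) hr0.le)

include hn hf0 in
lemma bound_lower {x y G : ℝ} (hx : 0 < x) (hxy : x ≤ y) (hG : 0 ≤ G)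
    (hb : ∀ r, x < r → r < y → G ≤ (r^2) ^ (((n:ℝ)-2)/2) * f (r • u)) :
    ENNReal.ofReal ((y^2-x^2)/2 * G) ≤
      ∫⁻ r in Ioo x y, ENNReal.ofReal (r^(n-1) * f (r • u)) := by
  rw [← aux_lin x y G hx.le hxy hG]
  refine lintegral_mono_ae ?_
  filter_upwards [ae_restrict_mem measurableSet_Ioo] with r hr
  have hr0 : 0 < r := lt_trans hx hr.1
  rw [aux_pow n hn r hr0, mul_assoc]
  exact ENNReal.ofReal_le_ofReal
    (mul_le_mul_of_nonneg_left (hb r hr.1 hr.2) hr0.le)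
end Bounds

section Core
variable {n : ℕ} {f : EuclideanSpace ℝ (Fin n) → ℝ}
  {W : Set (EuclideanSpace ℝ (Fin n))} {dmin dmax : ℝ} {pstar : ℝ}

lemma smul_meas (hW : MeasurableSet W) {k : ℝ} (hk : k ≠ 0) :
    MeasurableSet (k • W) := by
  have : k • W = (fun x : EuclideanSpace ℝ (Fin n) => k⁻¹ • x) ⁻¹' W := by
    ext x; rw [Set.mem_smul_set_iff_inv_smul_mem₀ hk]; rfl
  rw [this]
  exact (measurable_const_smul (k⁻¹ : ℝ)) hW

lemma core_concave (hn : 1 ≤ n)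
    (hf0 : ∀ z, 0 ≤ f z) (hfm : Measurable f)
    (hanti : ∀ u : EuclideanSpace ℝ (Fin n), ‖u‖ = 1 →
      AntitoneOn (fun p : ℝ => p ^ (((n : ℝ) - 2) / 2) * f (Real.sqrt p • u))
        (Ici pstar))
    (hW : MeasurableSet W) (hstar : StarConvex ℝ 0 W)
    (hsub1 : closedBall 0 dmin ⊆ W) (hsub2 : W ⊆ closedBall 0 dmax)
    (hdmin : 0 < dmin)
    {a b c t : ℝ} (ha : 0 < a) (hac : a ≤ c) (hcb : c ≤ b)
    (ht0 : 0 ≤ t) (ht1 : t ≤ 1) (hcoef : t * (c - a) = (1 - t) * (b - c))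
    (hreg : pstar ≤ a * dmin ^ 2) :
    ENNReal.ofReal (1 - t) *
        ∫⁻ z in (Real.sqrt b • W \ Real.sqrt c • W), ENNReal.ofReal (f z) ≤
      ENNReal.ofReal t *
        ∫⁻ z in (Real.sqrt c • W \ Real.sqrt a • W), ENNReal.ofReal (f z) := by
  have hc : 0 < c := lt_of_lt_of_le ha hac
  have hb : 0 < b := lt_of_lt_of_le hc hcb
  have hma : MeasurableSet (Real.sqrt a • W) := smul_meas hW (by positivity)
  have hmc : MeasurableSet (Real.sqrt c • W) := smul_meas hW (by positivity)
  have hmb : MeasurableSet (Real.sqrt b • W) := smul_meas hW (by positivity)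
  rw [aux_polar n hn _ hfm.ennreal_ofReal _ (hmb.diff hmc),
    aux_polar n hn _ hfm.ennreal_ofReal _ (hmc.diff hma),
    ← lintegral_const_mul' _ _ ENNReal.ofReal_ne_top,
    ← lintegral_const_mul' _ _ ENNReal.ofReal_ne_top]
  refine lintegral_mono fun u => ?_
  have hu : ‖(u : EuclideanSpace ℝ (Fin n))‖ = 1 := mem_sphere_zero_iff_norm.mp u.2
  rw [annulus_eq hstar hsub1 hsub2 hdmin hu f hc hcb,
    annulus_eq hstar hsub1 hsub2 hdmin hu f ha hac]
  set R := rad W (u : EuclideanSpace ℝ (Fin n)) with hRdef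
  have hRd : dmin ≤ R := rad_ge hsub1 hsub2 hdmin hu
  have hR0 : 0 < R := lt_of_lt_of_le hdmin hRd
  set G := (c * R ^ 2) ^ (((n : ℝ) - 2) / 2) *
    f (Real.sqrt (c * R ^ 2) • (u : EuclideanSpace ℝ (Fin n))) with hGdef
  have hG : 0 ≤ G := mul_nonneg (Real.rpow_nonneg (by positivity) _) (hf0 _)
  have hd2 : dmin ^ 2 ≤ R ^ 2 := pow_le_pow_left₀ hdmin.le hRd 2
  have hpa : pstar ≤ a * R ^ 2 := by nlinarith
  have hpc : pstar ≤ c * R ^ 2 := by nlinarith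
  have hxc : (0:ℝ) < Real.sqrt c * R := by positivity
  have hxa : (0:ℝ) < Real.sqrt a * R := by positivity
  have hsq : ∀ g : ℝ, 0 ≤ g → (Real.sqrt g * R) ^ 2 = g * R ^ 2 := fun g hg => by
    rw [mul_pow, Real.sq_sqrt hg]
  have h_up : (∫⁻ r in Ioo (Real.sqrt c * R) (Real.sqrt b * R),
      ENNReal.ofReal (r ^ (n-1) * f (r • (u:EuclideanSpace ℝ (Fin n))))) ≤
      ENNReal.ofReal (((Real.sqrt b * R)^2 - (Real.sqrt c * R)^2)/2 * G) := by
    refine bound_upper hn f hf0 _ hxc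
      (mul_le_mul_of_nonneg_right (Real.sqrt_le_sqrt hcb) hR0.le) hG ?_
    intro r h1 h2
    have hr0 : 0 < r := lt_trans hxc h1
    have hle : c * R ^ 2 ≤ r ^ 2 := by
      have := pow_lt_pow_left₀ h1 hxc.le two_ne_zero
      rw [hsq c hc.le] at this; exact this.le
    have hm2 : r ^ 2 ∈ Ici pstar := le_trans hpc hle
    have := hanti u hu hpc hm2 hle
    simpa only [Real.sqrt_sq hr0.le] using this
  have h_low : ENNReal.ofReal (((Real.sqrt c * R)^2 - (Real.sqrt a * R)^2)/2 * G) ≤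
      ∫⁻ r in Ioo (Real.sqrt a * R) (Real.sqrt c * R),
        ENNReal.ofReal (r ^ (n-1) * f (r • (u:EuclideanSpace ℝ (Fin n)))) := by
    refine bound_lower hn f hf0 _ hxa
      (mul_le_mul_of_nonneg_right (Real.sqrt_le_sqrt hac) hR0.le) hG ?_
    intro r h1 h2
    have hr0 : 0 < r := lt_trans hxa h1
    have hm1 : r ^ 2 ∈ Ici pstar := by
      have := pow_lt_pow_left₀ h1 hxa.le two_ne_zero
      rw [hsq a ha.le] at this
      exact le_trans hpa this.le
    have hle : r ^ 2 ≤ c * R ^ 2 := by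
      have := pow_lt_pow_left₀ h2 hr0.le two_ne_zero
      rw [hsq c hc.le] at this; exact this.le
    have := hanti u hu hm1 hpc hle
    simpa only [Real.sqrt_sq hr0.le] using this
  have hkey : (1 - t) * (((Real.sqrt b * R)^2 - (Real.sqrt c * R)^2)/2 * G) =
      t * (((Real.sqrt c * R)^2 - (Real.sqrt a * R)^2)/2 * G) := by
    rw [hsq b hb.le, hsq c hc.le, hsq a ha.le]
    linear_combination (R ^ 2 * G / 2) * hcoef.symm
  calc ENNReal.ofReal (1 - t) * _ ≤ ENNReal.ofReal (1 - t) *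
        ENNReal.ofReal (((Real.sqrt b * R)^2 - (Real.sqrt c * R)^2)/2 * G) :=
        mul_le_mul_right h_up _
    _ = ENNReal.ofReal ((1 - t) * (((Real.sqrt b * R)^2 - (Real.sqrt c * R)^2)/2 * G)) :=
        (ENNReal.ofReal_mul (by linarith)).symm
    _ = ENNReal.ofReal (t * (((Real.sqrt c * R)^2 - (Real.sqrt a * R)^2)/2 * G)) := by
        rw [hkey]
    _ = ENNReal.ofReal t *
        ENNReal.ofReal (((Real.sqrt c * R)^2 - (Real.sqrt a * R)^2)/2 * G) :=
        ENNReal.ofReal_mul ht0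
    _ ≤ _ := mul_le_mul_right h_low _

lemma core_convex (hn : 1 ≤ n)
    (hf0 : ∀ z, 0 ≤ f z) (hfm : Measurable f)
    (hmono : ∀ u : EuclideanSpace ℝ (Fin n), ‖u‖ = 1 →
      MonotoneOn (fun p : ℝ => p ^ (((n : ℝ) - 2) / 2) * f (Real.sqrt p • u))
        (Ioc (0:ℝ) pstar))
    (hW : MeasurableSet W) (hstar : StarConvex ℝ 0 W)
    (hsub1 : closedBall 0 dmin ⊆ W) (hsub2 : W ⊆ closedBall 0 dmax)
    (hdmin : 0 < dmin) (hdd : dmin ≤ dmax)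
    {a b c t : ℝ} (ha : 0 < a) (hac : a ≤ c) (hcb : c ≤ b)
    (ht0 : 0 ≤ t) (ht1 : t ≤ 1) (hcoef : t * (c - a) = (1 - t) * (b - c))
    (hreg : b * dmax ^ 2 ≤ pstar) :
    ENNReal.ofReal t *
        ∫⁻ z in (Real.sqrt c • W \ Real.sqrt a • W), ENNReal.ofReal (f z) ≤
      ENNReal.ofReal (1 - t) *
        ∫⁻ z in (Real.sqrt b • W \ Real.sqrt c • W), ENNReal.ofReal (f z) := by
  have hc : 0 < c := lt_of_lt_of_le ha hac
  have hb : 0 < b := lt_of_lt_of_le hc hcb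
  have hma : MeasurableSet (Real.sqrt a • W) := smul_meas hW (by positivity)
  have hmc : MeasurableSet (Real.sqrt c • W) := smul_meas hW (by positivity)
  have hmb : MeasurableSet (Real.sqrt b • W) := smul_meas hW (by positivity)
  rw [aux_polar n hn _ hfm.ennreal_ofReal _ (hmb.diff hmc),
    aux_polar n hn _ hfm.ennreal_ofReal _ (hmc.diff hma),
    ← lintegral_const_mul' _ _ ENNReal.ofReal_ne_top,
    ← lintegral_const_mul' _ _ ENNReal.ofReal_ne_top]
  refine lintegral_mono fun u => ?_
  have hu : ‖(u : EuclideanSpace ℝ (Fin n))‖ = 1 := mem_sphere_zero_iff_norm.mp u.2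
  rw [annulus_eq hstar hsub1 hsub2 hdmin hu f hc hcb,
    annulus_eq hstar hsub1 hsub2 hdmin hu f ha hac]
  set R := rad W (u : EuclideanSpace ℝ (Fin n)) with hRdef
  have hRd : dmin ≤ R := rad_ge hsub1 hsub2 hdmin hu
  have hRD : R ≤ dmax := rad_le hsub1 hsub2 hdmin hu
  have hR0 : 0 < R := lt_of_lt_of_le hdmin hRd
  set G := (c * R ^ 2) ^ (((n : ℝ) - 2) / 2) *
    f (Real.sqrt (c * R ^ 2) • (u : EuclideanSpace ℝ (Fin n))) with hGdef
  have hG : 0 ≤ G := mul_nonneg (Real.rpow_nonneg (by positivity) _) (hf0 _)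
  have hD2 : R ^ 2 ≤ dmax ^ 2 := pow_le_pow_left₀ hR0.le hRD 2
  have hpc : c * R ^ 2 ≤ pstar := by nlinarith
  have hpb : b * R ^ 2 ≤ pstar := by nlinarith
  have hmemc : c * R ^ 2 ∈ Ioc (0:ℝ) pstar := ⟨by positivity, hpc⟩
  have hxc : (0:ℝ) < Real.sqrt c * R := by positivity
  have hxa : (0:ℝ) < Real.sqrt a * R := by positivity
  have hsq : ∀ g : ℝ, 0 ≤ g → (Real.sqrt g * R) ^ 2 = g * R ^ 2 := fun g hg => by
    rw [mul_pow, Real.sq_sqrt hg]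
  have h_up : (∫⁻ r in Ioo (Real.sqrt a * R) (Real.sqrt c * R),
      ENNReal.ofReal (r ^ (n-1) * f (r • (u:EuclideanSpace ℝ (Fin n))))) ≤
      ENNReal.ofReal (((Real.sqrt c * R)^2 - (Real.sqrt a * R)^2)/2 * G) := by
    refine bound_upper hn f hf0 _ hxa
      (mul_le_mul_of_nonneg_right (Real.sqrt_le_sqrt hac) hR0.le) hG ?_
    intro r h1 h2
    have hr0 : 0 < r := lt_trans hxa h1
    have hle : r ^ 2 ≤ c * R ^ 2 := by
      have := pow_lt_pow_left₀ h2 hr0.le two_ne_zero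
      rw [hsq c hc.le] at this; exact this.le
    have hm2 : r ^ 2 ∈ Ioc (0:ℝ) pstar := ⟨by positivity, le_trans hle hpc⟩
    have := hmono u hu hm2 hmemc hle
    simpa only [Real.sqrt_sq hr0.le] using this
  have h_low : ENNReal.ofReal (((Real.sqrt b * R)^2 - (Real.sqrt c * R)^2)/2 * G) ≤
      ∫⁻ r in Ioo (Real.sqrt c * R) (Real.sqrt b * R),
        ENNReal.ofReal (r ^ (n-1) * f (r • (u:EuclideanSpace ℝ (Fin n)))) := by
    refine bound_lower hn f hf0 _ hxc
      (mul_le_mul_of_nonneg_right (Real.sqrt_le_sqrt hcb) hR0.le) hG ?_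
    intro r h1 h2
    have hr0 : 0 < r := lt_trans hxc h1
    have hle : c * R ^ 2 ≤ r ^ 2 := by
      have := pow_lt_pow_left₀ h1 hxc.le two_ne_zero
      rw [hsq c hc.le] at this; exact this.le
    have hm2 : r ^ 2 ∈ Ioc (0:ℝ) pstar := by
      refine ⟨by positivity, ?_⟩
      have := pow_lt_pow_left₀ h2 hr0.le two_ne_zero
      rw [hsq b hb.le] at this
      exact le_trans this.le hpb
    have := hmono u hu hmemc hm2 hle
    simpa only [Real.sqrt_sq hr0.le] using this
  have hkey : t * (((Real.sqrt c * R)^2 - (Real.sqrt a * R)^2)/2 * G) =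
      (1 - t) * (((Real.sqrt b * R)^2 - (Real.sqrt c * R)^2)/2 * G) := by
    rw [hsq b hb.le, hsq c hc.le, hsq a ha.le]
    linear_combination (R ^ 2 * G / 2) * hcoef
  calc ENNReal.ofReal t * _ ≤ ENNReal.ofReal t *
        ENNReal.ofReal (((Real.sqrt c * R)^2 - (Real.sqrt a * R)^2)/2 * G) :=
        mul_le_mul_right h_up _
    _ = ENNReal.ofReal (t * (((Real.sqrt c * R)^2 - (Real.sqrt a * R)^2)/2 * G)) :=
        (ENNReal.ofReal_mul ht0).symm
    _ = ENNReal.ofReal ((1 - t) * (((Real.sqrt b * R)^2 - (Real.sqrt c * R)^2)/2 * G)) := by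
        rw [hkey]
    _ = ENNReal.ofReal (1 - t) *
        ENNReal.ofReal (((Real.sqrt b * R)^2 - (Real.sqrt c * R)^2)/2 * G) :=
        ENNReal.ofReal_mul (by linarith)
    _ ≤ _ := mul_le_mul_right h_low _



lemma smul_subset (hstar : StarConvex ℝ 0 W) {s tt : ℝ} (hs : 0 < s) (hst : s ≤ tt) :
    s • W ⊆ tt • W := by
  have htt : 0 < tt := lt_of_lt_of_le hs hst
  rintro x ⟨y, hy, rfl⟩
  refine ⟨(s / tt) • y, hstar.smul_mem hy (by positivity) ((div_le_one htt).2 hst), ?_⟩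
  show tt • ((s / tt) • y) = s • y
  rw [smul_smul, mul_div_cancel₀ _ htt.ne']

lemma F_ineqs (hn : 1 ≤ n)
    (hf0 : ∀ z, 0 ≤ f z) (hfm : Measurable f) (hfi : Integrable f)
    (hmono : ∀ u : EuclideanSpace ℝ (Fin n), ‖u‖ = 1 →
      MonotoneOn (fun p : ℝ => p ^ (((n : ℝ) - 2) / 2) * f (Real.sqrt p • u))
        (Ioc (0:ℝ) pstar))
    (hanti : ∀ u : EuclideanSpace ℝ (Fin n), ‖u‖ = 1 →
      AntitoneOn (fun p : ℝ => p ^ (((n : ℝ) - 2) / 2) * f (Real.sqrt p • u))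
        (Ici pstar))
    (hW : MeasurableSet W) (hstar : StarConvex ℝ 0 W)
    (hsub1 : closedBall 0 dmin ⊆ W) (hsub2 : W ⊆ closedBall 0 dmax)
    (hdmin : 0 < dmin) (hdd : dmin ≤ dmax)
    {a b t : ℝ} (ha : 0 < a) (hab : a ≤ b) (ht0 : 0 ≤ t) (ht1 : t ≤ 1) :
    (pstar ≤ a * dmin ^ 2 →
      t * (∫ x in Real.sqrt a • W, f x) + (1 - t) * (∫ x in Real.sqrt b • W, f x) ≤
        ∫ x in Real.sqrt (t * a + (1 - t) * b) • W, f x) ∧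
    (b * dmax ^ 2 ≤ pstar →
      (∫ x in Real.sqrt (t * a + (1 - t) * b) • W, f x) ≤
        t * (∫ x in Real.sqrt a • W, f x) + (1 - t) * (∫ x in Real.sqrt b • W, f x)) := by
  set c := t * a + (1 - t) * b with hcdef
  have hac : a ≤ c := by nlinarith
  have hcb : c ≤ b := by nlinarith
  have hc : 0 < c := lt_of_lt_of_le ha hac
  have hb : 0 < b := lt_of_lt_of_le hc hcb
  have hcoef : t * (c - a) = (1 - t) * (b - c) := by rw [hcdef]; ring
  have hma : MeasurableSet (Real.sqrt a • W) := smul_meas hW (by positivity)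
  have hmc : MeasurableSet (Real.sqrt c • W) := smul_meas hW (by positivity)
  have hmb : MeasurableSet (Real.sqrt b • W) := smul_meas hW (by positivity)
  have hIac : Real.sqrt a • W ⊆ Real.sqrt c • W :=
    smul_subset hstar (by positivity) (Real.sqrt_le_sqrt hac)
  have hIcb : Real.sqrt c • W ⊆ Real.sqrt b • W :=
    smul_subset hstar (by positivity) (Real.sqrt_le_sqrt hcb)
  set L : Set (EuclideanSpace ℝ (Fin n)) → ℝ≥0∞ :=
    fun S => ∫⁻ z in S, ENNReal.ofReal (f z) with hLdef
  have htot : (∫⁻ z, ENNReal.ofReal (f z)) ≠ ⊤ := by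
    rw [← ofReal_integral_eq_lintegral_ofReal hfi (Filter.Eventually.of_forall hf0)]
    exact ENNReal.ofReal_ne_top
  have hfin : ∀ S, L S ≠ ⊤ := fun S =>
    ne_top_of_le_ne_top htot (setLIntegral_le_lintegral _ _)
  have hrep : ∀ S : Set (EuclideanSpace ℝ (Fin n)),
      ∫ x in S, f x = (L S).toReal := fun S => by
    rw [hLdef]
    exact integral_eq_lintegral_of_nonneg_ae (Filter.Eventually.of_forall hf0)
      hfm.aestronglyMeasurable.restrict
  have hLc : L (Real.sqrt c • W) =
      L (Real.sqrt a • W) + L (Real.sqrt c • W \ Real.sqrt a • W) := by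
    rw [hLdef, ← lintegral_union (hmc.diff hma) disjoint_sdiff_self_right,
      Set.union_diff_cancel hIac]
  have hLb : L (Real.sqrt b • W) =
      L (Real.sqrt c • W) + L (Real.sqrt b • W \ Real.sqrt c • W) := by
    rw [hLdef, ← lintegral_union (hmb.diff hmc) disjoint_sdiff_self_right,
      Set.union_diff_cancel hIcb]
  have hone : ENNReal.ofReal t + ENNReal.ofReal (1 - t) = 1 := by
    rw [← ENNReal.ofReal_add ht0 (by linarith)]
    norm_num
  have hsum_eq : ∀ γ1 γ2 : ℝ,
      t * (∫ x in Real.sqrt γ1 • W, f x) + (1 - t) * (∫ x in Real.sqrt γ2 • W, f x) =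
      (ENNReal.ofReal t * L (Real.sqrt γ1 • W) +
        ENNReal.ofReal (1 - t) * L (Real.sqrt γ2 • W)).toReal := fun γ1 γ2 => by
    rw [ENNReal.toReal_add (ENNReal.mul_ne_top ENNReal.ofReal_ne_top (hfin _))
        (ENNReal.mul_ne_top ENNReal.ofReal_ne_top (hfin _)),
      ENNReal.toReal_mul, ENNReal.toReal_mul, ENNReal.toReal_ofReal ht0,
      ENNReal.toReal_ofReal (by linarith), hrep, hrep]
  constructor
  · intro hreg
    have hcore := core_concave hn hf0 hfm hanti hW hstar hsub1 hsub2 hdmin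
      ha hac hcb ht0 ht1 hcoef hreg
    have hEN : ENNReal.ofReal t * L (Real.sqrt a • W) +
        ENNReal.ofReal (1 - t) * L (Real.sqrt b • W) ≤ L (Real.sqrt c • W) := by
      calc ENNReal.ofReal t * L (Real.sqrt a • W) +
            ENNReal.ofReal (1 - t) * L (Real.sqrt b • W)
          = ENNReal.ofReal t * L (Real.sqrt a • W) +
            ENNReal.ofReal (1 - t) * L (Real.sqrt c • W) +
            ENNReal.ofReal (1 - t) * L (Real.sqrt b • W \ Real.sqrt c • W) := by
            rw [hLb, mul_add]; ring
        _ ≤ ENNReal.ofReal t * L (Real.sqrt a • W) +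
            ENNReal.ofReal (1 - t) * L (Real.sqrt c • W) +
            ENNReal.ofReal t * L (Real.sqrt c • W \ Real.sqrt a • W) :=
            add_le_add_right hcore _
        _ = (ENNReal.ofReal t + ENNReal.ofReal (1 - t)) * L (Real.sqrt c • W) := by
            rw [hLc, mul_add, add_mul]; ring
        _ = L (Real.sqrt c • W) := by rw [hone, one_mul]
    rw [hsum_eq a b, hrep (Real.sqrt c • W)]
    exact ENNReal.toReal_mono (hfin _) hEN
  · intro hreg
    have hcore := core_convex hn hf0 hfm hmono hW hstar hsub1 hsub2 hdmin hdd
      ha hac hcb ht0 ht1 hcoef hreg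
    have hEN : L (Real.sqrt c • W) ≤ ENNReal.ofReal t * L (Real.sqrt a • W) +
        ENNReal.ofReal (1 - t) * L (Real.sqrt b • W) := by
      calc L (Real.sqrt c • W)
          = (ENNReal.ofReal t + ENNReal.ofReal (1 - t)) * L (Real.sqrt c • W) := by
            rw [hone, one_mul]
        _ = ENNReal.ofReal t * L (Real.sqrt a • W) +
            ENNReal.ofReal (1 - t) * L (Real.sqrt c • W) +
            ENNReal.ofReal t * L (Real.sqrt c • W \ Real.sqrt a • W) := by
            rw [hLc, mul_add, add_mul]; ring
        _ ≤ ENNReal.ofReal t * L (Real.sqrt a • W) +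
            ENNReal.ofReal (1 - t) * L (Real.sqrt c • W) +
            ENNReal.ofReal (1 - t) * L (Real.sqrt b • W \ Real.sqrt c • W) :=
            add_le_add_right hcore _
        _ = ENNReal.ofReal t * L (Real.sqrt a • W) +
            ENNReal.ofReal (1 - t) * L (Real.sqrt b • W) := by
            rw [hLb, mul_add]; ring
    rw [hsum_eq a b, hrep (Real.sqrt c • W)]
    refine ENNReal.toReal_mono ?_ hEN
    exact ENNReal.add_ne_top.2 ⟨ENNReal.mul_ne_top ENNReal.ofReal_ne_top (hfin _),
      ENNReal.mul_ne_top ENNReal.ofReal_ne_top (hfin _)⟩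


end Core

/-- For a noise density with unimodal radial power density (peak at
`p*`), the SER of a decoder with center-convex decision regions is convex on
`{γ | 0 < γ ∧ p*/d_min² ≤ γ}` and concave on `(0, p*/d_max²]`. -/
theorem ser_convexity_unimodal_noise
    (n M : ℕ) (hn : 1 ≤ n)
    (f : EuclideanSpace ℝ (Fin n) → ℝ)
    (hf_nonneg : ∀ x, 0 ≤ f x) (hf_meas : Measurable f)
    (hf_int : Integrable f)
    (pstar : ℝ) (hpstar : 0 < pstar)
    (hmono : ∀ u : EuclideanSpace ℝ (Fin n), ‖u‖ = 1 →
      MonotoneOn (fun p : ℝ => p ^ (((n : ℝ) - 2) / 2) * f (Real.sqrt p • u))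
        (Ioc (0 : ℝ) pstar))
    (hanti : ∀ u : EuclideanSpace ℝ (Fin n), ‖u‖ = 1 →
      AntitoneOn (fun p : ℝ => p ^ (((n : ℝ) - 2) / 2) * f (Real.sqrt p • u))
        (Ici pstar))
    (q : Fin M → ℝ) (hq : ∀ i, 0 ≤ q i) (hqsum : ∑ i, q i = 1)
    (Ω : Fin M → Set (EuclideanSpace ℝ (Fin n)))
    (hΩmeas : ∀ i, MeasurableSet (Ω i))
    (hΩstar : ∀ i, StarConvex ℝ (0 : EuclideanSpace ℝ (Fin n)) (Ω i))
    (dmin dmax : ℝ) (hdmin : 0 < dmin) (hdd : dmin ≤ dmax)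
    (hball : ∀ i, Metric.closedBall (0 : EuclideanSpace ℝ (Fin n)) dmin ⊆ Ω i ∧
      Ω i ⊆ Metric.closedBall (0 : EuclideanSpace ℝ (Fin n)) dmax)
    (Pe : ℝ → ℝ)
    (hPe : ∀ γ, Pe γ = 1 - ∑ i, q i * ∫ x in Real.sqrt γ • Ω i, f x) :
    ConvexOn ℝ {γ : ℝ | 0 < γ ∧ pstar / dmin ^ 2 ≤ γ} Pe ∧
      ConcaveOn ℝ (Ioc (0 : ℝ) (pstar / dmax ^ 2)) Pe := by
  have hdmax : 0 < dmax := lt_of_lt_of_le hdmin hdd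
  have key : ∀ i : Fin M, ∀ a b t : ℝ, 0 < a → a ≤ b → 0 ≤ t → t ≤ 1 →
      (pstar ≤ a * dmin ^ 2 →
        t * (∫ x in Real.sqrt a • Ω i, f x) + (1 - t) * (∫ x in Real.sqrt b • Ω i, f x) ≤
          ∫ x in Real.sqrt (t * a + (1 - t) * b) • Ω i, f x) ∧
      (b * dmax ^ 2 ≤ pstar →
        (∫ x in Real.sqrt (t * a + (1 - t) * b) • Ω i, f x) ≤
          t * (∫ x in Real.sqrt a • Ω i, f x) + (1 - t) * (∫ x in Real.sqrt b • Ω i, f x)) :=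
    fun i a b t ha hab ht0 ht1 =>
      F_ineqs hn hf_nonneg hf_meas hf_int hmono hanti (hΩmeas i) (hΩstar i)
        (hball i).1 (hball i).2 hdmin hdd ha hab ht0 ht1
  constructor
  · refine ⟨?_, ?_⟩
    · have : {γ : ℝ | 0 < γ ∧ pstar / dmin ^ 2 ≤ γ} =
          Ioi (0:ℝ) ∩ Ici (pstar / dmin ^ 2) := Set.ext fun γ => Iff.rfl
      rw [this]
      exact (convex_Ioi _).inter (convex_Ici _)
    · intro x hx y hy ta tb hta htb htab
      simp only [smul_eq_mul, hPe]
      have hx0 : 0 < x := hx.1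
      have hy0 : 0 < y := hy.1
      have hxr : pstar ≤ x * dmin ^ 2 := (div_le_iff₀ (pow_pos hdmin 2)).1 hx.2
      have hyr : pstar ≤ y * dmin ^ 2 := (div_le_iff₀ (pow_pos hdmin 2)).1 hy.2
      have hper : ∀ i : Fin M,
          ta * (∫ z in Real.sqrt x • Ω i, f z) + tb * (∫ z in Real.sqrt y • Ω i, f z) ≤
            ∫ z in Real.sqrt (ta * x + tb * y) • Ω i, f z := by
        intro i
        rcases le_total x y with hxy | hyx
        · have htb' : tb = 1 - ta := by linarith
          have := (key i x y ta hx0 hxy hta (by linarith)).1 hxr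
          rw [htb']
          exact this
        · have hta' : ta = 1 - tb := by linarith
          have := (key i y x tb hy0 hyx htb (by linarith)).1 hyr
          rw [← hta'] at this
          have harg : tb * y + ta * x = ta * x + tb * y := by ring
          rw [harg] at this
          linarith
      have hsum : ∑ i, q i * ∫ z in Real.sqrt x • Ω i, f z = _ := rfl
      have hle : ta * (∑ i, q i * ∫ z in Real.sqrt x • Ω i, f z) +
          tb * (∑ i, q i * ∫ z in Real.sqrt y • Ω i, f z) ≤
          ∑ i, q i * ∫ z in Real.sqrt (ta * x + tb * y) • Ω i, f z := by
        rw [Finset.mul_sum, Finset.mul_sum, ← Finset.sum_add_distrib]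
        refine Finset.sum_le_sum fun i _ => ?_
        have h1 : ta * (q i * ∫ z in Real.sqrt x • Ω i, f z) +
            tb * (q i * ∫ z in Real.sqrt y • Ω i, f z) =
            q i * (ta * (∫ z in Real.sqrt x • Ω i, f z) +
              tb * (∫ z in Real.sqrt y • Ω i, f z)) := by ring
        rw [h1]
        exact mul_le_mul_of_nonneg_left (hper i) (hq i)
      nlinarith [hle]
  · refine ⟨convex_Ioc _ _, ?_⟩
    intro x hx y hy ta tb hta htb htab
    simp only [smul_eq_mul, hPe]
    have hx0 : 0 < x := hx.1
    have hy0 : 0 < y := hy.1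
    have hxr : x * dmax ^ 2 ≤ pstar := (le_div_iff₀ (pow_pos hdmax 2)).1 hx.2
    have hyr : y * dmax ^ 2 ≤ pstar := (le_div_iff₀ (pow_pos hdmax 2)).1 hy.2
    have hper : ∀ i : Fin M,
        (∫ z in Real.sqrt (ta * x + tb * y) • Ω i, f z) ≤
          ta * (∫ z in Real.sqrt x • Ω i, f z) + tb * (∫ z in Real.sqrt y • Ω i, f z) := by
      intro i
      rcases le_total x y with hxy | hyx
      · have htb' : tb = 1 - ta := by linarith
        have := (key i x y ta hx0 hxy hta (by linarith)).2 hyr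
        rw [htb']
        exact this
      · have hta' : ta = 1 - tb := by linarith
        have := (key i y x tb hy0 hyx htb (by linarith)).2 hxr
        rw [← hta'] at this
        have harg : tb * y + ta * x = ta * x + tb * y := by ring
        rw [harg] at this
        linarith
    have hle : ∑ i, q i * ∫ z in Real.sqrt (ta * x + tb * y) • Ω i, f z ≤
        ta * (∑ i, q i * ∫ z in Real.sqrt x • Ω i, f z) +
          tb * (∑ i, q i * ∫ z in Real.sqrt y • Ω i, f z) := by
      rw [Finset.mul_sum, Finset.mul_sum, ← Finset.sum_add_distrib]
      refine Finset.sum_le_sum fun i _ => ?_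
      have h1 : ta * (q i * ∫ z in Real.sqrt x • Ω i, f z) +
          tb * (q i * ∫ z in Real.sqrt y • Ω i, f z) =
          q i * (ta * (∫ z in Real.sqrt x • Ω i, f z) +
            tb * (∫ z in Real.sqrt y • Ω i, f z)) := by ring
      rw [h1]
      exact mul_le_mul_of_nonneg_left (hper i) (hq i)
    nlinarith [hle]
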